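/- Suppose R is a principal ideal domain and a_1 ≠ 0. Let Z be an R-submodule of S having a basis {z_2,…,z_n} such that the determinant of the matrix whose j-th column consists of the coordinates of z_j relative to w(1,2),…,w(1,n) is equal to a_1. Then Z = S, and hence {z_2,…,z_n} is a basis of S. -/

import Mathlib

open Matrix

lemma key_dvd' {R : Type*} [CommRing R] {m : ℕ} {a : R} {b c : Fin m → R}
    {C : Matrix (Fin m) (Fin m) R}
    (hbc : a ∣ ∑ i, b i * c i) (hbC : ∀ j, a ∣ ∑ i, b i * C i j)
    (h1 : ∃ (r : R) (u : Fin m → R), r * a + ∑ i, u i * b i = 1) :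
    ∀ j, a ∣ (C.adjugate *ᵥ c) j := by
  intro j
  rw [← Matrix.cramer_eq_adjugate_mulVec, Matrix.cramer_apply]
  set M := C.updateCol j c with hM
  have hcol : ∀ k, a ∣ ∑ l, b l * M l k := by
    intro k
    by_cases hk : k = j
    · subst hk
      simpa [hM, Matrix.updateCol_apply] using hbc
    · simpa [hM, Matrix.updateCol_apply, hk] using hbC k
  have hbd : ∀ i, a ∣ b i * M.det := by
    intro i
    obtain ⟨s, hs⟩ : ∃ s : Fin m → R, ∀ k, ∑ l, b l * M l k = a * s k :=
      ⟨fun k => (hcol k).choose, fun k => (hcol k).choose_spec⟩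
    have h2 : (M.updateRow i (∑ l, b l • M l)).det = b i • M.det :=
      Matrix.det_updateRow_sum M i b
    have h3 : (∑ l, b l • M l) = a • s := by
      funext k
      simpa [Finset.sum_apply, smul_eq_mul] using hs k
    rw [h3, Matrix.det_updateRow_smul] at h2
    exact ⟨(M.updateRow i s).det, by rw [← smul_eq_mul, ← h2]⟩
  obtain ⟨r, u, h1⟩ := h1
  have hsum : r * a * M.det + ∑ i, u i * b i * M.det = M.det := by
    have := congrArg (· * M.det) h1
    simpa [add_mul, Finset.sum_mul] using this
  rw [← hsum]
  refine dvd_add ⟨r * M.det, by ring⟩ (Finset.dvd_sum fun i _ => ?_)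
  rw [mul_assoc]
  exact (hbd i).mul_left (u i)

theorem stmt_10 {R : Type*} [CommRing R] [IsDomain R] [IsPrincipalIdealRing R]
    {K : Type*} [Field K] [Algebra R K] [IsFractionRing R K]
    {m : ℕ} (hm : 1 ≤ m) (a : Fin (m + 1) → R)
    (huni : Ideal.span (Set.range a) = ⊤) (ha1 : a 0 ≠ 0)
    (SF : Submodule R (Fin (m + 1) → K))
    (hSF : ∀ x, x ∈ SF ↔ (∀ i, ∃ r : R, algebraMap R K r = x i) ∧
      ∑ i, algebraMap R K (a i) * x i = 0)
    (w : Fin m → Fin (m + 1) → K)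
    (hw : ∀ j k, w j k =
      if k = 0 then -(algebraMap R K (a j.succ)) / algebraMap R K (a 0)
      else if k = j.succ then 1 else 0)
    (Z : Submodule R (Fin (m + 1) → K)) (hZS : Z ≤ SF)
    (bz : Module.Basis (Fin m) R Z)
    (C : Matrix (Fin m) (Fin m) R)
    (hC : ∀ j, (bz j : Fin (m + 1) → K) = ∑ i, algebraMap R K (C i j) • w i)
    (hdet : C.det = a 0) :
    Z = SF ∧ ∃ b : Module.Basis (Fin m) R SF,
      ∀ j, (b j : Fin (m + 1) → K) = (bz j : Fin (m + 1) → K) := by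
  have hA : Function.Injective (algebraMap R K) := IsFractionRing.injective R K
  have ha0K : algebraMap R K (a 0) ≠ 0 := fun h => ha1 (hA (by simpa using h))
  -- evaluate sums of w at successor coordinates
  have wsucc : ∀ (e : Fin m → K) (i : Fin m), (∑ l, e l • w l) i.succ = e i := by
    intro e i
    rw [Finset.sum_apply]
    have : ∀ l, (e l • w l) i.succ = if i = l then e l else 0 := by
      intro l
      rw [Pi.smul_apply, hw, if_neg (Fin.succ_ne_zero i), smul_eq_mul]
      by_cases h : i = l
      · simp [h]
      · rw [if_neg (fun hs => h (Fin.succ_injective _ hs)), mul_zero, if_neg h]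
    simp [this]
  -- extraction of integral coordinates of elements of SF
  have coords : ∀ x ∈ SF, ∃ c : Fin m → R,
      (a 0 ∣ ∑ i, a i.succ * c i) ∧ x = ∑ i, algebraMap R K (c i) • w i := by
    intro x hx
    obtain ⟨hint, heq⟩ := (hSF x).mp hx
    choose rr hrr using hint
    refine ⟨fun i => rr i.succ, ?_, ?_⟩
    · have h0 : a 0 * rr 0 + ∑ i : Fin m, a i.succ * rr i.succ = 0 := by
        apply hA
        rw [_root_.map_add, _root_.map_mul, _root_.map_sum, _root_.map_zero]
        rw [Fin.sum_univ_succ] at heq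
        rw [← heq]
        congr 1
        · rw [hrr 0]
        · exact Finset.sum_congr rfl fun i _ => by rw [_root_.map_mul, hrr i.succ]
      exact ⟨-rr 0, by linear_combination h0⟩
    · funext k
      induction k using Fin.cases with
      | succ i => rw [wsucc, hrr i.succ]
      | zero =>
        rw [Finset.sum_apply]
        have hterm : ∀ i : Fin m, (algebraMap R K (rr i.succ) • w i) 0 =
            -(algebraMap R K (a i.succ * rr i.succ)) / algebraMap R K (a 0) := by
          intro i
          rw [Pi.smul_apply, hw, if_pos rfl, smul_eq_mul, _root_.map_mul]
          ring
        rw [Fin.sum_univ_succ] at heq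
        have heq' : algebraMap R K (a 0) * x 0 = -∑ i : Fin m,
            algebraMap R K (a i.succ * rr i.succ) := by
          have : ∑ i : Fin m, algebraMap R K (a i.succ) * x i.succ =
              ∑ i : Fin m, algebraMap R K (a i.succ * rr i.succ) := by
            exact Finset.sum_congr rfl fun i _ => by rw [_root_.map_mul, hrr i.succ]
          linear_combination heq - this
        rw [Finset.sum_congr rfl fun i _ => hterm i, ← Finset.sum_div, eq_div_iff ha0K,
          Finset.sum_neg_distrib]
        linear_combination heq'
  -- the columns of C are the coordinates of the basis of Z, hence divisibility
  have hbC : ∀ j, a 0 ∣ ∑ i, a i.succ * C i j := by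
    intro j
    obtain ⟨c', hc'd, hc'⟩ := coords _ (hZS (bz j).2)
    have hcc : ∀ i, c' i = C i j := by
      intro i
      apply hA
      have h1 : (bz j : Fin (m + 1) → K) i.succ = algebraMap R K (c' i) := by
        rw [hc', wsucc]
      have h2 : (bz j : Fin (m + 1) → K) i.succ = algebraMap R K (C i j) := by
        rw [hC j, wsucc]
      rw [← h1, h2]
    calc a 0 ∣ ∑ i, a i.succ * c' i := hc'd
      _ = ∑ i, a i.succ * C i j := Finset.sum_congr rfl fun i _ => by rw [hcc i]
  -- unimodularity
  have h1 : ∃ (r : R) (u : Fin m → R), r * a 0 + ∑ i, u i * a i.succ = 1 := by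
    have : (1 : R) ∈ Ideal.span (Set.range a) := by rw [huni]; trivial
    obtain ⟨t, ht⟩ := Ideal.mem_span_range_iff_exists_fun.mp this
    refine ⟨t 0, fun i => t i.succ, ?_⟩
    rw [← ht, Fin.sum_univ_succ]
  -- SF ≤ Z
  have hSZ : SF ≤ Z := by
    intro x hx
    obtain ⟨c, hbc, hxw⟩ := coords x hx
    have hadj := key_dvd' (b := fun i => a i.succ) hbc hbC h1
    choose d hd using hadj
    have hCd : C *ᵥ d = c := by
      funext i
      have h4 : (C *ᵥ (C.adjugate *ᵥ c)) i = a 0 * c i := by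
        rw [Matrix.mulVec_mulVec, Matrix.mul_adjugate, hdet]
        simp [Matrix.smul_mulVec, Matrix.one_mulVec, smul_eq_mul]
      have h5 : (C *ᵥ (C.adjugate *ᵥ c)) i = a 0 * (C *ᵥ d) i := by
        have h7 : C.adjugate *ᵥ c = fun j => a 0 * d j := funext hd
        rw [h7]
        simp only [Matrix.mulVec, dotProduct, Finset.mul_sum]
        exact Finset.sum_congr rfl fun j _ => by ring
      exact mul_left_cancel₀ ha1 (by rw [← h5, h4])
    have hx_eq : x = ((∑ j, d j • bz j : Z) : Fin (m + 1) → K) := by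
      rw [Submodule.coe_sum]
      have : ∀ j : Fin m, ((d j • bz j : Z) : Fin (m + 1) → K) =
          ∑ i, (algebraMap R K (d j) * algebraMap R K (C i j)) • w i := by
        intro j
        rw [show ((d j • bz j : Z) : Fin (m + 1) → K)
            = d j • (bz j : Fin (m + 1) → K) from rfl, hC j, Finset.smul_sum]
        refine Finset.sum_congr rfl fun i _ => ?_
        rw [← smul_assoc, Algebra.smul_def (d j) (algebraMap R K (C i j))]
      rw [Finset.sum_congr rfl fun j _ => this j, Finset.sum_comm, hxw]
      refine Finset.sum_congr rfl fun i _ => ?_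
      rw [← Finset.sum_smul]
      congr 1
      have : (C *ᵥ d) i = c i := congrFun hCd i
      rw [← this]
      simp only [Matrix.mulVec, dotProduct, _root_.map_sum, _root_.map_mul]
      exact Finset.sum_congr rfl fun j _ => by ring
    rw [hx_eq]
    exact (∑ j, d j • bz j : Z).2
  have hZeq : Z = SF := le_antisymm hZS hSZ
  refine ⟨hZeq, ⟨bz.map (LinearEquiv.ofEq Z SF hZeq), fun j => ?_⟩⟩
  simp [Module.Basis.map_apply]
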